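/- For real α > -1 and m, n ∈ ℕ₀, ∫_0^∞ L_m^α(z) L_n^α(z) z^α e^{-z} dz = (Γ(1+n+α)/n!) δ_{m,n}, i.e. the Laguerre polynomials are orthogonal with respect to the weight z^α e^{-z} on (0,∞) with squared norm Γ(1+n+α)/n!. -/

import Mathlib

open Finset Filter Topology MeasureTheory

/-- The generalized Laguerre polynomial
`L_n^α(z) = (-1)^n ∑_{k=0}^n (-α-n)_{n-k} z^k / (k! (n-k)!)`. -/
noncomputable def laguerre (n : ℕ) (α : ℂ) (z : ℂ) : ℂ :=
  (-1) ^ n * ∑ k ∈ Finset.range (n + 1),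
    (ascPochhammer ℂ (n - k)).eval (-α - (n : ℂ)) * z ^ k
      / ((k.factorial : ℂ) * ((n - k).factorial : ℂ))

section Aux
open Polynomial Set

lemma asc_vandermonde (x y : ℂ) : ∀ n : ℕ,
    (ascPochhammer ℂ n).eval (x + y)
      = ∑ k ∈ Finset.range (n + 1),
          (n.choose k : ℂ) * (ascPochhammer ℂ k).eval x * (ascPochhammer ℂ (n - k)).eval y
  | 0 => by simp
  | n + 1 => by
    have key : ∀ k ∈ Finset.range (n + 1),
        (n.choose k : ℂ) * (ascPochhammer ℂ k).eval x * (ascPochhammer ℂ (n - k)).eval y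
            * (x + y + n)
        = (n.choose k : ℂ) * (ascPochhammer ℂ (k+1)).eval x * (ascPochhammer ℂ (n - k)).eval y
          + (n.choose k : ℂ) * (ascPochhammer ℂ k).eval x
              * (ascPochhammer ℂ (n - k + 1)).eval y := by
      intro k hk
      have hk' : k ≤ n := Nat.lt_succ_iff.mp (Finset.mem_range.mp hk)
      have hcast : ((n - k : ℕ) : ℂ) = (n : ℂ) - (k : ℂ) := by
        push_cast [hk']; ring
      rw [ascPochhammer_succ_eval, ascPochhammer_succ_eval, hcast]
      ring
    rw [ascPochhammer_succ_eval, asc_vandermonde x y n, Finset.sum_mul,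
      Finset.sum_congr rfl key, Finset.sum_add_distrib]
    -- now RHS side
    rw [Finset.sum_range_succ' (fun k => ((n+1).choose k : ℂ) * (ascPochhammer ℂ k).eval x
        * (ascPochhammer ℂ (n + 1 - k)).eval y)]
    have h1 : ∀ i ∈ Finset.range (n + 1),
        (((n+1).choose (i+1) : ℕ) : ℂ) * (ascPochhammer ℂ (i+1)).eval x
            * (ascPochhammer ℂ (n + 1 - (i+1))).eval y
        = (n.choose i : ℂ) * (ascPochhammer ℂ (i+1)).eval x * (ascPochhammer ℂ (n - i)).eval y
          + (n.choose (i+1) : ℂ) * (ascPochhammer ℂ (i+1)).eval x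
              * (ascPochhammer ℂ (n - i)).eval y := by
      intro i hi
      have : n + 1 - (i + 1) = n - i := by omega
      rw [this, Nat.choose_succ_succ]
      push_cast
      ring
    rw [Finset.sum_congr rfl h1, Finset.sum_add_distrib]
    -- second pieces
    have h2 : ∑ k ∈ Finset.range (n + 1),
        (n.choose k : ℂ) * (ascPochhammer ℂ k).eval x * (ascPochhammer ℂ (n - k + 1)).eval y
        = ∑ i ∈ Finset.range n,
            (n.choose (i+1) : ℂ) * (ascPochhammer ℂ (i+1)).eval x
              * (ascPochhammer ℂ (n - (i+1) + 1)).eval y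
          + (n.choose 0 : ℂ) * (ascPochhammer ℂ 0).eval x
              * (ascPochhammer ℂ (n - 0 + 1)).eval y :=
      Finset.sum_range_succ' _ n
    have h3 : ∑ i ∈ Finset.range (n + 1),
        (n.choose (i+1) : ℂ) * (ascPochhammer ℂ (i+1)).eval x
          * (ascPochhammer ℂ (n - i)).eval y
        = ∑ i ∈ Finset.range n,
            (n.choose (i+1) : ℂ) * (ascPochhammer ℂ (i+1)).eval x
              * (ascPochhammer ℂ (n - i)).eval y := by
      rw [Finset.sum_range_succ, Nat.choose_succ_self]
      simp
    have h4 : ∑ i ∈ Finset.range n,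
        (n.choose (i+1) : ℂ) * (ascPochhammer ℂ (i+1)).eval x
          * (ascPochhammer ℂ (n - (i+1) + 1)).eval y
        = ∑ i ∈ Finset.range n,
            (n.choose (i+1) : ℂ) * (ascPochhammer ℂ (i+1)).eval x
              * (ascPochhammer ℂ (n - i)).eval y := by
      refine Finset.sum_congr rfl fun i hi => ?_
      have : n - (i + 1) + 1 = n - i := by
        have := Finset.mem_range.mp hi; omega
      rw [this]
    rw [h2, h4, h3]
    have h5 : (n.choose 0 : ℂ) * (ascPochhammer ℂ 0).eval x
          * (ascPochhammer ℂ (n - 0 + 1)).eval y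
        = (((n+1).choose 0 : ℕ) : ℂ) * (ascPochhammer ℂ 0).eval x
          * (ascPochhammer ℂ (n + 1 - 0)).eval y := by
      norm_num
    rw [h5]
    ring

lemma gamma_shift (t : ℝ) (ht : 0 < t) : ∀ k : ℕ,
    Complex.Gamma ((t : ℂ) + k) = Complex.Gamma t * (ascPochhammer ℂ k).eval (t : ℂ)
  | 0 => by simp
  | k + 1 => by
    have hne : (t : ℂ) + k ≠ 0 := by
      intro h
      have : (t : ℝ) + k = 0 := by exact_mod_cast congrArg Complex.re h
      have : (0:ℝ) ≤ (k:ℝ) := Nat.cast_nonneg k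
      linarith
    have : ((t : ℂ) + (k + 1 : ℕ)) = ((t : ℂ) + k) + 1 := by push_cast; ring
    rw [this, Complex.Gamma_add_one _ hne, gamma_shift t ht k, ascPochhammer_succ_eval]
    ring

lemma term_integrable (α : ℝ) (hα : -1 < α) (p : ℕ) :
    IntegrableOn (fun z : ℝ => (z : ℂ) ^ p * (z : ℂ) ^ (α : ℂ) * Complex.exp (-z))
      (Set.Ioi (0:ℝ)) := by
  have hre : (0:ℝ) < (((α + p + 1 : ℝ) : ℂ)).re := by
    simp only [Complex.ofReal_re]
    have : (0:ℝ) ≤ (p:ℝ) := Nat.cast_nonneg p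
    linarith
  have h := Complex.GammaIntegral_convergent hre
  refine h.congr_fun (fun x hx => ?_) measurableSet_Ioi
  have hx0 : (0:ℝ) < x := hx
  have hxne : (x : ℂ) ≠ 0 := Complex.ofReal_ne_zero.mpr (ne_of_gt hx0)
  dsimp only
  rw [Complex.ofReal_exp, Complex.ofReal_neg]
  have : ((α + p + 1 : ℝ) : ℂ) - 1 = (p : ℂ) + (α : ℂ) := by push_cast; ring
  rw [this, Complex.cpow_add _ _ hxne, Complex.cpow_natCast]
  ring

lemma term_integral (α : ℝ) (hα : -1 < α) (p : ℕ) :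
    ∫ z in Set.Ioi (0:ℝ), (z : ℂ) ^ p * (z : ℂ) ^ (α : ℂ) * Complex.exp (-z)
      = Complex.Gamma ((α : ℂ) + p + 1) := by
  have hre : (0:ℝ) < (((α + p + 1 : ℝ) : ℂ)).re := by
    simp only [Complex.ofReal_re]
    have : (0:ℝ) ≤ (p:ℝ) := Nat.cast_nonneg p
    linarith
  have h := Complex.Gamma_eq_integral hre
  have harg : ((α + p + 1 : ℝ) : ℂ) = (α : ℂ) + p + 1 := by push_cast; ring
  rw [← harg, h, Complex.GammaIntegral]
  refine setIntegral_congr_fun measurableSet_Ioi (fun x hx => ?_)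
  have hx0 : (0:ℝ) < x := hx
  have hxne : (x : ℂ) ≠ 0 := Complex.ofReal_ne_zero.mpr (ne_of_gt hx0)
  rw [Complex.ofReal_exp, Complex.ofReal_neg]
  have : ((α + p + 1 : ℝ) : ℂ) - 1 = (p : ℂ) + (α : ℂ) := by push_cast; ring
  rw [this, Complex.cpow_add _ _ hxne, Complex.cpow_natCast]
  ring

noncomputable def lagCoeff (α : ℝ) (n k : ℕ) : ℂ :=
  (-1) ^ n * (ascPochhammer ℂ (n - k)).eval (-(α : ℂ) - (n : ℂ))
    / ((k.factorial : ℂ) * ((n - k).factorial : ℂ))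

lemma laguerre_eq (α : ℝ) (n : ℕ) (z : ℂ) :
    laguerre n (α : ℂ) z = ∑ k ∈ Finset.range (n + 1), lagCoeff α n k * z ^ k := by
  unfold laguerre lagCoeff
  rw [Finset.mul_sum]
  exact Finset.sum_congr rfl fun k _ => by ring

lemma sum_pochhammer_div (x y : ℂ) (n : ℕ) :
    ∑ k ∈ Finset.range (n + 1),
        (ascPochhammer ℂ (n - k)).eval y * (ascPochhammer ℂ k).eval x
          / ((k.factorial : ℂ) * ((n - k).factorial : ℂ))
      = (ascPochhammer ℂ n).eval (x + y) / (n.factorial : ℂ) := by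
  rw [asc_vandermonde, Finset.sum_div]
  refine Finset.sum_congr rfl fun k hk => ?_
  have hk' : k ≤ n := Nat.lt_succ_iff.mp (Finset.mem_range.mp hk)
  have hfact : (n.choose k) * k.factorial * (n - k).factorial = n.factorial :=
    Nat.choose_mul_factorial_mul_factorial hk'
  have hn : (n.factorial : ℂ) = (n.choose k : ℂ) * (k.factorial : ℂ) * ((n - k).factorial : ℂ) := by
    exact_mod_cast hfact.symm
  have h1 : (k.factorial : ℂ) ≠ 0 := Nat.cast_ne_zero.mpr k.factorial_ne_zero
  have h2 : ((n - k).factorial : ℂ) ≠ 0 := Nat.cast_ne_zero.mpr (n - k).factorial_ne_zero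
  have h3 : (n.choose k : ℂ) ≠ 0 :=
    Nat.cast_ne_zero.mpr (Nat.choose_pos hk').ne'
  rw [hn]
  field_simp

lemma eval_one_asc (n : ℕ) : (ascPochhammer ℂ n).eval 1 = (n.factorial : ℂ) := by
  exact_mod_cast ascPochhammer_eval_one ℂ n

lemma laguerre_ortho_le (α : ℝ) (hα : -1 < α) (m n : ℕ) (hmn : m ≤ n) :
    ∫ z in Set.Ioi (0 : ℝ),
        laguerre m (α : ℂ) z * laguerre n (α : ℂ) z * (z : ℂ) ^ (α : ℂ) * Complex.exp (-z)
    = if m = n then Complex.Gamma (((α + n + 1 : ℝ) : ℂ)) / (n.factorial : ℂ) else 0 := by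
  have hexp : ∀ z : ℝ,
      laguerre m (α : ℂ) z * laguerre n (α : ℂ) z * (z : ℂ) ^ (α : ℂ) * Complex.exp (-z)
      = ∑ j ∈ Finset.range (m + 1), ∑ k ∈ Finset.range (n + 1),
          lagCoeff α m j * lagCoeff α n k *
            ((z : ℂ) ^ (j + k) * (z : ℂ) ^ (α : ℂ) * Complex.exp (-z)) := by
    intro z
    rw [laguerre_eq, laguerre_eq, Finset.sum_mul_sum]
    simp only [Finset.sum_mul]
    refine Finset.sum_congr rfl fun j _ => Finset.sum_congr rfl fun k _ => ?_
    rw [pow_add]; ring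
  have hFint : ∀ j k : ℕ, Integrable (fun z : ℝ =>
      lagCoeff α m j * lagCoeff α n k *
        ((z : ℂ) ^ (j + k) * (z : ℂ) ^ (α : ℂ) * Complex.exp (-z)))
      (volume.restrict (Set.Ioi 0)) :=
    fun j k => (term_integrable α hα (j + k)).const_mul _
  simp only [hexp]
  rw [MeasureTheory.integral_finset_sum _
      (fun j _ => integrable_finset_sum _ (fun k _ => hFint j k))]
  have step2 : ∀ j ∈ Finset.range (m + 1),
      (∫ z in Set.Ioi (0:ℝ), ∑ k ∈ Finset.range (n + 1),
          lagCoeff α m j * lagCoeff α n k *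
            ((z : ℂ) ^ (j + k) * (z : ℂ) ^ (α : ℂ) * Complex.exp (-z)))
      = ∑ k ∈ Finset.range (n + 1),
          lagCoeff α m j * lagCoeff α n k * Complex.Gamma ((α : ℂ) + (j + k : ℕ) + 1) := by
    intro j _
    rw [MeasureTheory.integral_finset_sum _ (fun k _ => hFint j k)]
    refine Finset.sum_congr rfl fun k _ => ?_
    rw [MeasureTheory.integral_const_mul, term_integral α hα (j + k)]
  rw [Finset.sum_congr rfl step2]
  have hinner : ∀ j : ℕ,
      (∑ k ∈ Finset.range (n + 1),
        lagCoeff α m j * lagCoeff α n k * Complex.Gamma ((α : ℂ) + (j + k : ℕ) + 1))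
      = lagCoeff α m j * ((-1) ^ n * Complex.Gamma (((α + j + 1 : ℝ) : ℂ)) *
          (ascPochhammer ℂ n).eval ((j : ℂ) + 1 - (n : ℂ)) / (n.factorial : ℂ)) := by
    intro j
    have ht : (0:ℝ) < α + j + 1 := by
      have : (0:ℝ) ≤ (j : ℝ) := Nat.cast_nonneg j
      linarith
    have hγ : ∀ k : ℕ, Complex.Gamma ((α : ℂ) + (j + k : ℕ) + 1)
        = Complex.Gamma (((α + j + 1 : ℝ) : ℂ)) *
            (ascPochhammer ℂ k).eval (((α + j + 1 : ℝ) : ℂ)) := by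
      intro k
      have harg : (α : ℂ) + (j + k : ℕ) + 1 = ((α + j + 1 : ℝ) : ℂ) + k := by
        push_cast; ring
      rw [harg, gamma_shift (α + j + 1) ht k]
    have hterm : ∀ k ∈ Finset.range (n + 1),
        lagCoeff α m j * lagCoeff α n k * Complex.Gamma ((α : ℂ) + (j + k : ℕ) + 1)
        = (lagCoeff α m j * ((-1) ^ n * Complex.Gamma (((α + j + 1 : ℝ) : ℂ)))) *
            ((ascPochhammer ℂ (n - k)).eval (-(α : ℂ) - (n : ℂ)) *
              (ascPochhammer ℂ k).eval (((α + j + 1 : ℝ) : ℂ))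
              / ((k.factorial : ℂ) * ((n - k).factorial : ℂ))) := by
      intro k _
      rw [hγ k]
      unfold lagCoeff
      ring
    rw [Finset.sum_congr rfl hterm, ← Finset.mul_sum, sum_pochhammer_div]
    have hxy : ((α + j + 1 : ℝ) : ℂ) + (-(α : ℂ) - (n : ℂ)) = (j : ℂ) + 1 - (n : ℂ) := by
      push_cast; ring
    rw [hxy]
    ring
  rw [Finset.sum_congr rfl (fun j _ => hinner j)]
  have hzero : ∀ j : ℕ, j < n → (ascPochhammer ℂ n).eval ((j : ℂ) + 1 - (n : ℂ)) = 0 := by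
    intro j hj
    have harg : (j : ℂ) + 1 - (n : ℂ) = -(((n - 1 - j : ℕ) : ℂ)) := by
      have h1 : ((n - 1 - j : ℕ) : ℂ) = (n : ℂ) - 1 - (j : ℂ) := by
        have : ((n - 1 - j : ℕ) : ℝ)= (n : ℝ) - 1 - (j : ℝ) := by
          rw [Nat.cast_sub (by omega), Nat.cast_sub (by omega)]
          push_cast; ring
        exact_mod_cast this
      rw [h1]; ring
    rw [harg]
    exact ascPochhammer_eval_neg_coe_nat_of_lt (by omega)
  rcases eq_or_lt_of_le hmn with rfl | hlt
  · rw [if_pos rfl, Finset.sum_range_succ]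
    have hrest : ∑ j ∈ Finset.range m,
        lagCoeff α m j * ((-1) ^ m * Complex.Gamma (((α + j + 1 : ℝ) : ℂ)) *
          (ascPochhammer ℂ m).eval ((j : ℂ) + 1 - (m : ℂ)) / (m.factorial : ℂ)) = 0 := by
      refine Finset.sum_eq_zero fun j hj => ?_
      rw [hzero j (Finset.mem_range.mp hj)]
      ring
    rw [hrest, zero_add]
    have hone : (m : ℂ) + 1 - (m : ℂ) = 1 := by ring
    rw [hone, eval_one_asc]
    unfold lagCoeff
    have h0 : m - m = 0 := Nat.sub_self m
    rw [h0]
    simp only [ascPochhammer_zero, Polynomial.eval_one, Nat.factorial_zero, Nat.cast_one]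
    have hm : (m.factorial : ℂ) ≠ 0 := Nat.cast_ne_zero.mpr m.factorial_ne_zero
    field_simp
    rw [← pow_mul, mul_comm m 2, pow_mul]
    norm_num
  · rw [if_neg (by omega)]
    refine Finset.sum_eq_zero fun j hj => ?_
    have hj' : j < n := by
      have := Finset.mem_range.mp hj; omega
    rw [hzero j hj']
    ring

theorem laguerre_orthogonality (α : ℝ) (hα : -1 < α) (m n : ℕ) :
    ∫ z in Set.Ioi (0 : ℝ),
        laguerre m (α : ℂ) z * laguerre n (α : ℂ) z * (z : ℂ) ^ (α : ℂ) * Complex.exp (-z)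
    = ((Real.Gamma (1 + n + α) : ℂ) / (n.factorial : ℂ)) * (if m = n then 1 else 0) := by
  have hgamma : Complex.Gamma (((α + n + 1 : ℝ) : ℂ)) = ((Real.Gamma (1 + n + α) : ℝ) : ℂ) := by
    rw [Complex.Gamma_ofReal]
    have h : α + (n : ℝ) + 1 = 1 + n + α := by ring
    rw [h]
  rcases le_or_gt m n with hmn | hnm
  · rw [laguerre_ortho_le α hα m n hmn]
    by_cases h : m = n
    · rw [if_pos h, if_pos h, hgamma, mul_one]
    · rw [if_neg h, if_neg h, mul_zero]
  · have hswap : ∀ z : ℝ,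
        laguerre m (α : ℂ) z * laguerre n (α : ℂ) z * (z : ℂ) ^ (α : ℂ) * Complex.exp (-z)
        = laguerre n (α : ℂ) z * laguerre m (α : ℂ) z * (z : ℂ) ^ (α : ℂ) * Complex.exp (-z) := by
      intro z; ring
    simp only [hswap]
    rw [laguerre_ortho_le α hα n m hnm.le]
    rw [if_neg (by omega), if_neg (by omega), mul_zero]

end Aux
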